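/- arXiv:1910.03511 — 2 statements merged into one kernel-verified Lean document; each statement's English description precedes it below -/
import Mathlib

section
/- Let X, Y be faces of 𝒜 with X ≤ Y in the facial weak order FW(𝒜,B), and let B′ be a region of 𝒜 such that B′ ≤ X in FW(𝒜,B). Then the interval [X,Y] in FW(𝒜,B) and the interval [X,Y] in FW(𝒜,B′) (the facial weak order of the same arrangement with base region B′) coincide: a face Z satisfies X ≤ Z ≤ Y in FW(𝒜,B) if and only if X ≤ Z ≤ Y in FW(𝒜,B′), and the two orders agree on this set of faces. -/
open scoped RealInnerProductSpace Pointwise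

variable {V : Type*} [NormedAddCommGroup V] [InnerProductSpace ℝ V] [FiniteDimensional ℝ V]
  {ι : Type*} [Fintype ι]

/-- The (open) complement of the union of the hyperplanes with chosen normals `e i`. -/
def arrComplement (e : ι → V) : Set V := {v | ∀ i, ⟪e i, v⟫ ≠ 0}

/-- A region of the arrangement: the closure of a connected component of the complement
of the union of the hyperplanes. -/
def IsRegion (e : ι → V) (R : Set V) : Prop :=
  ∃ x ∈ arrComplement e, R = closure (connectedComponentIn (arrComplement e) x)

/-- The positive closed half-space bounded by the hyperplane with normal `e i`. -/
def posHalf (e : ι → V) (i : ι) : Set V := {v | 0 ≤ ⟪e i, v⟫}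

/-- The negative closed half-space bounded by the hyperplane with normal `e i`. -/
def negHalf (e : ι → V) (i : ι) : Set V := {v | ⟪e i, v⟫ ≤ 0}

/-- The separation set of two regions: the (indices of) hyperplanes such that the two
regions lie in opposite closed half-spaces. -/
def sepSet (e : ι → V) (R R' : Set V) : Set ι :=
  {i | (R ⊆ posHalf e i ∧ R' ⊆ negHalf e i) ∨ (R ⊆ negHalf e i ∧ R' ⊆ posHalf e i)}

/-- The order of the poset of regions `PR(𝒜,B)`. -/
def PRle (e : ι → V) (B R R' : Set V) : Prop := sepSet e B R ⊆ sepSet e B R'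

/-- Strict order of the poset of regions. -/
def PRlt (e : ι → V) (B R R' : Set V) : Prop := PRle e B R R' ∧ R ≠ R'

/-- Cover relation in the poset of regions. -/
def PRcover (e : ι → V) (B R R' : Set V) : Prop :=
  PRlt e B R R' ∧ ¬ ∃ U, IsRegion e U ∧ PRlt e B R U ∧ PRlt e B U R'

/-- A face of the arrangement: an intersection of a nonempty collection of regions. -/
def IsFace (e : ι → V) (F : Set V) : Prop :=
  ∃ Rs : Set (Set V), Rs.Nonempty ∧ (∀ R ∈ Rs, IsRegion e R) ∧ F = ⋂₀ Rs

/-- `[m, M]` is the facial interval of the face `F` in the poset of regions: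
the regions containing `F` are exactly those between `m` and `M`. -/
def IsFacialInterval (e : ι → V) (B F m M : Set V) : Prop :=
  IsRegion e m ∧ IsRegion e M ∧
    ∀ R, IsRegion e R → (F ⊆ R ↔ (PRle e B m R ∧ PRle e B R M))

/-- The facial weak order `FW(𝒜,B)`: `F ≤ G` iff `m_F ≤ m_G` and `M_F ≤ M_G`
in the poset of regions. -/
def FWle (e : ι → V) (B F G : Set V) : Prop :=
  ∃ mF MF mG MG, IsFacialInterval e B F mF MF ∧ IsFacialInterval e B G mG MG ∧
    PRle e B mF mG ∧ PRle e B MF MG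

/-- Strict facial weak order. -/
def FWlt (e : ι → V) (B F G : Set V) : Prop := FWle e B F G ∧ F ≠ G

/-- Cover relation in the facial weak order. -/
def FWcover (e : ι → V) (B F G : Set V) : Prop :=
  FWlt e B F G ∧ ¬ ∃ X, IsFace e X ∧ FWlt e B F X ∧ FWlt e B X G

/-- Two faces have the same maximal region `M` of their facial intervals. -/
def SameMax (e : ι → V) (B F G : Set V) : Prop :=
  ∃ m m' M, IsFacialInterval e B F m M ∧ IsFacialInterval e B G m' M

/-- Two faces have the same minimal region `m` of their facial intervals. -/
def SameMin (e : ι → V) (B F G : Set V) : Prop :=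
  ∃ m M M', IsFacialInterval e B F m M ∧ IsFacialInterval e B G m M'

/-- The dimension of a face: the dimension of its linear span. -/
noncomputable def fdim (F : Set V) : ℕ := Module.finrank ℝ (Submodule.span ℝ F)

open Classical in
/-- The covector (sign vector) of a face: the sign of `⟪e i, x⟫` for `x` in the
relative interior of the face. -/
noncomputable def covec (e : ι → V) (F : Set V) (i : ι) : SignType :=
  if ∀ x ∈ intrinsicInterior ℝ F, 0 < ⟪e i, x⟫ then 1
  else if ∀ x ∈ intrinsicInterior ℝ F, ⟪e i, x⟫ < 0 then -1
  else 0

/-- Composition of sign vectors. -/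
def scomp (f g : ι → SignType) (i : ι) : SignType := if f i ≠ 0 then f i else g i

/-- The set of roots of the arrangement: the chosen normals and their opposites. -/
def roots (e : ι → V) : Set V := Set.range e ∪ Set.range (fun i => -(e i))

/-- The root inversion set of a face. -/
def rootInv (e : ι → V) (F : Set V) : Set V :=
  {v ∈ roots e | ∃ x ∈ intrinsicInterior ℝ F, ⟪x, v⟫ ≤ 0}

/-- `H i` is a wall of the region `R`. -/
noncomputable def IsWall (e : ι → V) (R : Set V) (i : ι) : Prop :=
  fdim ({v : V | ⟪e i, v⟫ = 0} ∩ R) = Module.finrank ℝ V - 1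

/-- A region is simplicial when the normal vectors of its walls are linearly independent. -/
def IsSimplicialRegion (e : ι → V) (R : Set V) : Prop :=
  LinearIndependent ℝ (fun i : {i : ι // IsWall e R i} => e i.1)

/-- The arrangement is simplicial when all its regions are. -/
def IsSimplicial (e : ι → V) : Prop := ∀ R, IsRegion e R → IsSimplicialRegion e R

/-- The arrangement is essential when the intersection of all its hyperplanes is `{0}`. -/
def IsEssential (e : ι → V) : Prop := (⋂ i, {v : V | ⟪e i, v⟫ = 0}) = ({0} : Set V)

/-- The poset of regions is a lattice: any two regions have a join and a meet. -/
def PRIsLattice (e : ι → V) (B : Set V) : Prop :=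
  ∀ R R', IsRegion e R → IsRegion e R' →
    (∃ J, IsRegion e J ∧ PRle e B R J ∧ PRle e B R' J ∧
      ∀ U, IsRegion e U → PRle e B R U → PRle e B R' U → PRle e B J U) ∧
    (∃ M, IsRegion e M ∧ PRle e B M R ∧ PRle e B M R' ∧
      ∀ U, IsRegion e U → PRle e B U R → PRle e B U R' → PRle e B U M)

open scoped symmDiff
open Topology

namespace FWAux

variable {e : ι → V}

private lemma key_mul {a b t : ℝ} (hab : a < 0 ↔ b < 0) (ha : a ≠ 0) (hb : b ≠ 0)
    (h : 0 ≤ a * t) : 0 ≤ b * t := by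
  rcases ha.lt_or_gt with h1 | h1
  · have h2 : b < 0 := hab.mp h1
    have ht : t ≤ 0 := by nlinarith
    nlinarith
  · have h2 : 0 < b := (hb.lt_or_gt).resolve_left fun hb0 => absurd (hab.mpr hb0) (not_lt.mpr h1.le)
    have ht : 0 ≤ t := by nlinarith
    exact mul_nonneg h2.le ht

/-- Every region is the closed polyhedral cone of weak sign conditions given by
any interior witness point. -/
lemma region_rep {R : Set V} (hR : IsRegion e R) :
    ∃ x, (∀ i, (⟪e i, x⟫ : ℝ) ≠ 0) ∧ R = {v | ∀ i, 0 ≤ ⟪e i, x⟫ * ⟪e i, v⟫} := by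
  obtain ⟨x, hx, rfl⟩ := hR
  have hx' : ∀ i, (⟪e i, x⟫ : ℝ) ≠ 0 := hx
  refine ⟨x, hx', ?_⟩
  have hcont : ∀ i : ι, Continuous fun v : V => (⟪e i, x⟫ * ⟪e i, v⟫ : ℝ) := fun i =>
    continuous_const.mul (continuous_const.inner continuous_id)
  have hcell : connectedComponentIn (arrComplement e) x
      = {v | ∀ i, 0 < ⟪e i, x⟫ * ⟪e i, v⟫} := by
    apply Set.Subset.antisymm
    · intro y hy i
      by_contra hneg
      have hyc : y ∈ arrComplement e := connectedComponentIn_subset _ _ hy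
      have hne : (⟪e i, x⟫ * ⟪e i, y⟫ : ℝ) ≠ 0 := mul_ne_zero (hx' i) (hyc i)
      have hlt : (⟪e i, x⟫ * ⟪e i, y⟫ : ℝ) < 0 := lt_of_le_of_ne (not_lt.mp hneg) hne
      have hxx : (0 : ℝ) < ⟪e i, x⟫ * ⟪e i, x⟫ := mul_self_pos.mpr (hx' i)
      obtain ⟨z, hz, hz0⟩ := isPreconnected_connectedComponentIn.intermediate_value hy
        (mem_connectedComponentIn hx) ((hcont i).continuousOn) ⟨hlt.le, hxx.le⟩
      have hzc : z ∈ arrComplement e := connectedComponentIn_subset _ _ hz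
      exact mul_ne_zero (hx' i) (hzc i) hz0
    · apply IsPreconnected.subset_connectedComponentIn
      · apply Convex.isPreconnected
        rw [Set.setOf_forall fun i (v : V) => 0 < ⟪e i, x⟫ * ⟪e i, v⟫]
        refine convex_iInter fun i => convex_halfSpace_gt ?_ 0
        exact ⟨fun a b => by simp [inner_add_right, mul_add], fun c a => by
          simp [real_inner_smul_right]; ring⟩
      · exact fun i => mul_self_pos.mpr (hx' i)
      · intro v hv i h0
        have := hv i
        rw [h0, mul_zero] at this
        exact lt_irrefl 0 this
  rw [hcell]
  apply Set.Subset.antisymm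
  · apply closure_minimal
    · exact fun v hv i => (hv i).le
    · rw [Set.setOf_forall fun i (v : V) => 0 ≤ ⟪e i, x⟫ * ⟪e i, v⟫]
      exact isClosed_iInter fun i => isClosed_le continuous_const (hcont i)
  · intro v hv
    have htend : Filter.Tendsto (fun t : ℝ => v + t • (x - v)) (𝓝[>] 0) (𝓝 v) := by
      have hc : Continuous fun t : ℝ => v + t • (x - v) := by continuity
      have h0 : Filter.Tendsto (fun t : ℝ => v + t • (x - v)) (𝓝[>] 0)
          (𝓝 (v + (0 : ℝ) • (x - v))) :=
        (hc.tendsto 0).mono_left (nhdsWithin_le_nhds (s := Set.Ioi (0 : ℝ)))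
      simpa using h0
    have hev : ∀ᶠ t in 𝓝[>] (0 : ℝ),
        (v + t • (x - v)) ∈ {w : V | ∀ i, 0 < ⟪e i, x⟫ * ⟪e i, w⟫} := by
      filter_upwards [Ioo_mem_nhdsGT_of_mem (Set.mem_Ico.mpr ⟨le_refl (0 : ℝ), zero_lt_one⟩)]
        with t ht i
      have hvi := hv i
      have expand : (⟪e i, v + t • (x - v)⟫ : ℝ) = ⟪e i, v⟫ + t * (⟪e i, x⟫ - ⟪e i, v⟫) := by
        simp [inner_add_right, real_inner_smul_right, inner_sub_right]
      show (0:ℝ) < ⟪e i, x⟫ * ⟪e i, v + t • (x - v)⟫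
      rw [expand]
      have h1 : (0 : ℝ) ≤ (1 - t) * (⟪e i, x⟫ * ⟪e i, v⟫) :=
        mul_nonneg (by linarith [ht.2]) hvi
      have h2 : (0 : ℝ) < t * (⟪e i, x⟫ * ⟪e i, x⟫) :=
        mul_pos ht.1 (mul_self_pos.mpr (hx' i))
      nlinarith
    exact mem_closure_of_tendsto htend hev

/-- Each region lies on exactly one side of each hyperplane. -/
lemma pos_iff_not_neg {R : Set V} (hR : IsRegion e R) (i : ι) :
    R ⊆ posHalf e i ↔ ¬ R ⊆ negHalf e i := by
  obtain ⟨x, hx, rfl⟩ := region_rep hR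
  have hxm : x ∈ {v : V | ∀ j, 0 ≤ ⟪e j, x⟫ * ⟪e j, v⟫} := fun j => mul_self_nonneg _
  rcases (hx i).lt_or_gt with h | h
  · refine iff_of_false ?_ (not_not_intro ?_)
    · intro hp
      have := hp hxm
      simp only [posHalf, Set.mem_setOf_eq] at this
      linarith
    · intro v hv
      have hvi := hv i
      simp only [negHalf, Set.mem_setOf_eq]
      nlinarith
  · refine iff_of_true ?_ ?_
    · intro v hv
      have hvi := hv i
      simp only [posHalf, Set.mem_setOf_eq]
      nlinarith
    · intro hp
      have := hp hxm
      simp only [negHalf, Set.mem_setOf_eq] at this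
      linarith

/-- The set of hyperplanes on whose negative side a region lies. -/
def NS (e : ι → V) (R : Set V) : Set ι := {i | R ⊆ negHalf e i}

lemma region_eq_of_NS {R R' : Set V} (hR : IsRegion e R) (hR' : IsRegion e R')
    (h : NS e R = NS e R') : R = R' := by
  have hiff : ∀ i, (R ⊆ negHalf e i ↔ R' ⊆ negHalf e i) := fun i => Set.ext_iff.mp h i
  obtain ⟨x, hx, rfl⟩ := region_rep hR
  obtain ⟨y, hy, rfl⟩ := region_rep hR'
  have hneg : ∀ (z : V), (∀ j, (⟪e j, z⟫ : ℝ) ≠ 0) → ∀ i : ι,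
      (({v : V | ∀ j, 0 ≤ ⟪e j, z⟫ * ⟪e j, v⟫} : Set V) ⊆ negHalf e i ↔ ⟪e i, z⟫ < 0) := by
    intro z hz i
    constructor
    · intro hs
      have hzm : z ∈ {v : V | ∀ j, 0 ≤ ⟪e j, z⟫ * ⟪e j, v⟫} := fun j => mul_self_nonneg _
      have := hs hzm
      simp only [negHalf, Set.mem_setOf_eq] at this
      exact lt_of_le_of_ne this (hz i)
    · intro hlt v hv
      have hvi := hv i
      simp only [negHalf, Set.mem_setOf_eq]
      nlinarith
  have hsgn : ∀ i, ((⟪e i, x⟫ : ℝ) < 0 ↔ (⟪e i, y⟫ : ℝ) < 0) := fun i => by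
    rw [← hneg x hx i, ← hneg y hy i]; exact hiff i
  ext v
  simp only [Set.mem_setOf_eq]
  exact ⟨fun hv i => key_mul (hsgn i) (hx i) (hy i) (hv i),
    fun hv i => key_mul (hsgn i).symm (hy i) (hx i) (hv i)⟩

lemma region_eq_of_subset {R R' : Set V} (hR' : IsRegion e R') (hR : IsRegion e R)
    (h : R' ⊆ R) : R' = R := by
  apply region_eq_of_NS hR' hR
  ext i
  simp only [NS, Set.mem_setOf_eq]
  constructor
  · intro hi
    by_contra hR2
    have hpos : R ⊆ posHalf e i := (pos_iff_not_neg hR i).mpr hR2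
    exact (pos_iff_not_neg hR' i).mp (h.trans hpos) hi
  · exact fun hi => h.trans hi

lemma sep_eq {C R : Set V} (hC : IsRegion e C) (hR : IsRegion e R) :
    sepSet e C R = NS e R ∆ NS e C := by
  ext i
  have h1 := pos_iff_not_neg hC i
  have h2 := pos_iff_not_neg hR i
  simp only [sepSet, Set.mem_setOf_eq, Set.mem_symmDiff, NS, Set.mem_setOf_eq]
  tauto

lemma NS_base {B : Set V} (hB : IsRegion e B) (hBpos : ∀ i, B ⊆ posHalf e i) :
    NS e B = (∅ : Set ι) := by
  ext i
  simp only [NS, Set.mem_setOf_eq, Set.mem_empty_iff_false, iff_false]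
  exact (pos_iff_not_neg hB i).mp (hBpos i)

lemma sep_base {B R : Set V} (hB : IsRegion e B) (hBpos : ∀ i, B ⊆ posHalf e i)
    (hR : IsRegion e R) : sepSet e B R = NS e R := by
  rw [sep_eq hB hR, NS_base hB hBpos, ← Set.bot_eq_empty, symmDiff_bot]

lemma PRleB_iff {B R R' : Set V} (hB : IsRegion e B) (hBpos : ∀ i, B ⊆ posHalf e i)
    (hR : IsRegion e R) (hR' : IsRegion e R') :
    PRle e B R R' ↔ NS e R ⊆ NS e R' := by
  unfold PRle
  rw [sep_base hB hBpos hR, sep_base hB hBpos hR']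

lemma PRleC_iff {C R R' : Set V} (hC : IsRegion e C) (hR : IsRegion e R) (hR' : IsRegion e R') :
    PRle e C R R' ↔ NS e R ∆ NS e C ⊆ NS e R' ∆ NS e C := by
  unfold PRle
  rw [sep_eq hC hR, sep_eq hC hR']

section SD

variable {S A C T : Set ι}

lemma sd_mono (hSA : S ⊆ A) (hSC : S ⊆ C) : A ∆ S ⊆ C ∆ S ↔ A ⊆ C := by
  constructor <;> intro h i hi
  · by_cases hiS : i ∈ S
    · exact hSC hiS
    · have hmem : i ∈ A ∆ S := Set.mem_symmDiff.mpr (Or.inl ⟨hi, hiS⟩)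
      rcases Set.mem_symmDiff.mp (h hmem) with ⟨h1, _⟩ | ⟨h1, _⟩
      · exact h1
      · exact absurd h1 hiS
  · rcases Set.mem_symmDiff.mp hi with ⟨h1, h2⟩ | ⟨h1, h2⟩
    · exact Set.mem_symmDiff.mpr (Or.inl ⟨h h1, h2⟩)
    · exact absurd (hSA h1) h2

lemma sd_dominate (h : A ∆ S ⊆ C ∆ S) (hSC : S ⊆ C) : S ⊆ A := by
  intro i hi
  by_contra hiA
  have hmem : i ∈ A ∆ S := Set.mem_symmDiff.mpr (Or.inr ⟨hi, hiA⟩)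
  rcases Set.mem_symmDiff.mp (h hmem) with ⟨_, h2⟩ | ⟨_, h2⟩
  · exact h2 hi
  · exact h2 (hSC hi)

lemma cube_iff (hSA : S ⊆ A) (hSC : S ⊆ C) (T : Set ι) :
    (A ∆ S ⊆ T ∆ S ∧ T ∆ S ⊆ C ∆ S) ↔ (A ⊆ T ∧ T ⊆ C) := by
  constructor
  · rintro ⟨h1, h2⟩
    have hST : S ⊆ T := sd_dominate h2 hSC
    exact ⟨(sd_mono hSA hST).mp h1, (sd_mono hST hSC).mp h2⟩
  · rintro ⟨h1, h2⟩
    have hST : S ⊆ T := hSA.trans h1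
    exact ⟨(sd_mono hSA hST).mpr h1, (sd_mono hST hSC).mpr h2⟩

end SD

lemma face_subset_region {F : Set V} (hF : IsFace e F) : ∃ R, IsRegion e R ∧ F ⊆ R := by
  obtain ⟨Rs, ⟨R0, hR0⟩, hreg, rfl⟩ := hF
  exact ⟨R0, hreg R0 hR0, Set.sInter_subset_of_mem hR0⟩

lemma region_isFace {R : Set V} (hR : IsRegion e R) : IsFace e R :=
  ⟨{R}, Set.singleton_nonempty R, by simpa, (Set.sInter_singleton R).symm⟩

lemma interval_self {C F m M : Set V} (hC : IsRegion e C) (hF : IsFace e F)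
    (h : IsFacialInterval e C F m M) : F ⊆ m ∧ F ⊆ M := by
  obtain ⟨hm, hM, hiff⟩ := h
  obtain ⟨R0, hR0, hFR0⟩ := face_subset_region hF
  obtain ⟨h1, h2⟩ := (hiff R0 hR0).mp hFR0
  have hmM : PRle e C m M := Set.Subset.trans h1 h2
  exact ⟨(hiff m hm).mpr ⟨Set.Subset.refl _, hmM⟩, (hiff M hM).mpr ⟨hmM, Set.Subset.refl _⟩⟩

lemma interval_unique {C F m M m' M' : Set V} (hC : IsRegion e C) (hF : IsFace e F)
    (h1 : IsFacialInterval e C F m M) (h2 : IsFacialInterval e C F m' M') :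
    m = m' ∧ M = M' := by
  obtain ⟨hFm, hFM⟩ := interval_self hC hF h1
  obtain ⟨hFm', hFM'⟩ := interval_self hC hF h2
  have e1 := (h1.2.2 m' h2.1).mp hFm'
  have e2 := (h2.2.2 m h1.1).mp hFm
  have e3 := (h1.2.2 M' h2.2.1).mp hFM'
  have e4 := (h2.2.2 M h1.2.1).mp hFM
  have hm : sepSet e C m = sepSet e C m' := Set.Subset.antisymm e1.1 e2.1
  have hM : sepSet e C M = sepSet e C M' := Set.Subset.antisymm e4.2 e3.2
  rw [sep_eq hC h1.1, sep_eq hC h2.1] at hm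
  rw [sep_eq hC h1.2.1, sep_eq hC h2.2.1] at hM
  exact ⟨region_eq_of_NS h1.1 h2.1 (symmDiff_left_injective _ hm),
    region_eq_of_NS h1.2.1 h2.2.1 (symmDiff_left_injective _ hM)⟩

lemma interval_transfer {B B' F m M : Set V} (hB : IsRegion e B)
    (hBpos : ∀ i, B ⊆ posHalf e i) (hB' : IsRegion e B')
    (hm : IsRegion e m) (hM : IsRegion e M)
    (hSm : NS e B' ⊆ NS e m) (hSM : NS e B' ⊆ NS e M) :
    IsFacialInterval e B F m M ↔ IsFacialInterval e B' F m M := by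
  have key : ∀ R, IsRegion e R →
      ((PRle e B m R ∧ PRle e B R M) ↔ (PRle e B' m R ∧ PRle e B' R M)) := by
    intro R hR
    rw [PRleB_iff hB hBpos hm hR, PRleB_iff hB hBpos hR hM,
      PRleC_iff hB' hm hR, PRleC_iff hB' hR hM]
    exact (cube_iff hSm hSM (NS e R)).symm
  constructor <;> rintro ⟨_, _, hiff⟩
  · exact ⟨hm, hM, fun R hR => (hiff R hR).trans (key R hR)⟩
  · exact ⟨hm, hM, fun R hR => (hiff R hR).trans (key R hR).symm⟩

end FWAux

open FWAux in
/-- An interval `[X,Y]` of the facial weak order is unchanged when the base region `B`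
is replaced by any region `B'` with `B' ≤ X`. -/
theorem stmt16 (e : ι → V) (hne : ∀ i, e i ≠ 0) (B : Set V)
    (hB : IsRegion e B) (hBpos : ∀ i, B ⊆ posHalf e i)
    (B' : Set V) (hB' : IsRegion e B')
    (X Y : Set V) (hX : IsFace e X) (hY : IsFace e Y)
    (hXY : FWle e B X Y) (hB'X : FWle e B B' X) :
    (∀ Z, IsFace e Z →
      ((FWle e B X Z ∧ FWle e B Z Y) ↔ (FWle e B' X Z ∧ FWle e B' Z Y))) ∧
    (∀ Z W, IsFace e Z → IsFace e W →
      FWle e B X Z → FWle e B Z Y → FWle e B X W → FWle e B W Y →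
      (FWle e B Z W ↔ FWle e B' Z W)) := by
  classical
  obtain ⟨mX, MX, mY, MY, hIX, hIY, hmXY, hMXY⟩ := hXY
  obtain ⟨m0, M0, m1, M1, hIB'0, hIX', hm01, hM01⟩ := hB'X
  obtain ⟨hm1, hM1⟩ := interval_unique hB hX hIX hIX'
  subst hm1; subst hM1
  -- the minimal region of B' is B' itself
  have hB'face : IsFace e B' := region_isFace hB'
  have hFm0 : B' ⊆ m0 := (interval_self hB hB'face hIB'0).1
  have hm0B' : m0 = B' := (region_eq_of_subset hB' hIB'0.1 hFm0).symm
  rw [hm0B'] at hm01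
  set S : Set ι := NS e B' with hSdef
  -- basic inclusions
  have hSmX : S ⊆ NS e mX := (PRleB_iff hB hBpos hB' hIX.1).mp hm01
  have hmXmY : NS e mX ⊆ NS e mY := (PRleB_iff hB hBpos hIX.1 hIY.1).mp hmXY
  have hMXMY : NS e MX ⊆ NS e MY := (PRleB_iff hB hBpos hIX.2.1 hIY.2.1).mp hMXY
  have minle : ∀ F m M, IsFace e F → IsFacialInterval e B F m M → NS e m ⊆ NS e M := by
    intro F m M hF hI
    obtain ⟨R0, hR0, hFR0⟩ := face_subset_region hF
    obtain ⟨h1, h2⟩ := (hI.2.2 R0 hR0).mp hFR0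
    exact ((PRleB_iff hB hBpos hI.1 hR0).mp h1).trans ((PRleB_iff hB hBpos hR0 hI.2.1).mp h2)
  have hmXMX : NS e mX ⊆ NS e MX := minle X mX MX hX hIX
  have hmYMY : NS e mY ⊆ NS e MY := minle Y mY MY hY hIY
  have hSmY : S ⊆ NS e mY := hSmX.trans hmXmY
  have hSMX : S ⊆ NS e MX := hSmX.trans hmXMX
  have hSMY : S ⊆ NS e MY := hSmY.trans hmYMY
  -- B'-intervals of X and Y
  have hIX2 : IsFacialInterval e B' X mX MX :=
    (interval_transfer hB hBpos hB' hIX.1 hIX.2.1 hSmX hSMX).mp hIX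
  have hIY2 : IsFacialInterval e B' Y mY MY :=
    (interval_transfer hB hBpos hB' hIY.1 hIY.2.1 hSmY hSMY).mp hIY
  -- data extraction for a face in the interval, from the B-side hypotheses
  have dataB : ∀ Z, IsFace e Z → FWle e B X Z → FWle e B Z Y →
      ∃ mZ MZ, IsFacialInterval e B Z mZ MZ ∧ IsFacialInterval e B' Z mZ MZ ∧
        NS e mX ⊆ NS e mZ ∧ NS e mZ ⊆ NS e mY ∧
        NS e MX ⊆ NS e MZ ∧ NS e MZ ⊆ NS e MY ∧
        S ⊆ NS e mZ ∧ S ⊆ NS e MZ := by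
    intro Z hZ h1 h2
    obtain ⟨a, b, c, d, hIa, hIc, hac, hbd⟩ := h1
    obtain ⟨ha, hb⟩ := interval_unique hB hX hIX hIa
    subst ha; subst hb
    obtain ⟨c', d', y1, y2, hIc', hIy, hcy, hdy⟩ := h2
    obtain ⟨hc1, hd1⟩ := interval_unique hB hZ hIc hIc'
    subst hc1; subst hd1
    obtain ⟨hy1, hy2⟩ := interval_unique hB hY hIY hIy
    subst hy1; subst hy2
    have i1 : NS e mX ⊆ NS e c := (PRleB_iff hB hBpos hIX.1 hIc.1).mp hac
    have i2 : NS e c ⊆ NS e mY := (PRleB_iff hB hBpos hIc.1 hIY.1).mp hcy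
    have i3 : NS e MX ⊆ NS e d := (PRleB_iff hB hBpos hIX.2.1 hIc.2.1).mp hbd
    have i4 : NS e d ⊆ NS e MY := (PRleB_iff hB hBpos hIc.2.1 hIY.2.1).mp hdy
    have hSc : S ⊆ NS e c := hSmX.trans i1
    have hSd : S ⊆ NS e d := hSMX.trans i3
    exact ⟨c, d, hIc,
      (interval_transfer hB hBpos hB' hIc.1 hIc.2.1 hSc hSd).mp hIc, i1, i2, i3, i4, hSc, hSd⟩
  -- data extraction from the B'-side hypotheses
  have dataB' : ∀ Z, IsFace e Z → FWle e B' X Z → FWle e B' Z Y →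
      ∃ mZ MZ, IsFacialInterval e B Z mZ MZ ∧ IsFacialInterval e B' Z mZ MZ ∧
        NS e mX ⊆ NS e mZ ∧ NS e mZ ⊆ NS e mY ∧
        NS e MX ⊆ NS e MZ ∧ NS e MZ ⊆ NS e MY ∧
        S ⊆ NS e mZ ∧ S ⊆ NS e MZ := by
    intro Z hZ h1 h2
    obtain ⟨a, b, c, d, hIa, hIc, hac, hbd⟩ := h1
    obtain ⟨ha, hb⟩ := interval_unique hB' hX hIX2 hIa
    subst ha; subst hb
    obtain ⟨c', d', y1, y2, hIc', hIy, hcy, hdy⟩ := h2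
    obtain ⟨hc1, hd1⟩ := interval_unique hB' hZ hIc hIc'
    subst hc1; subst hd1
    obtain ⟨hy1, hy2⟩ := interval_unique hB' hY hIY2 hIy
    subst hy1; subst hy2
    have j1 : NS e mX ∆ S ⊆ NS e c ∆ S := (PRleC_iff hB' hIX.1 hIc.1).mp hac
    have j2 : NS e c ∆ S ⊆ NS e mY ∆ S := (PRleC_iff hB' hIc.1 hIY.1).mp hcy
    have j3 : NS e MX ∆ S ⊆ NS e d ∆ S := (PRleC_iff hB' hIX.2.1 hIc.2.1).mp hbd
    have j4 : NS e d ∆ S ⊆ NS e MY ∆ S := (PRleC_iff hB' hIc.2.1 hIY.2.1).mp hdy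
    have hSc : S ⊆ NS e c := sd_dominate j2 hSmY
    have hSd : S ⊆ NS e d := sd_dominate j4 hSMY
    have i1 : NS e mX ⊆ NS e c := (sd_mono hSmX hSc).mp j1
    have i2 : NS e c ⊆ NS e mY := (sd_mono hSc hSmY).mp j2
    have i3 : NS e MX ⊆ NS e d := (sd_mono hSMX hSd).mp j3
    have i4 : NS e d ⊆ NS e MY := (sd_mono hSd hSMY).mp j4
    exact ⟨c, d, (interval_transfer hB hBpos hB' hIc.1 hIc.2.1 hSc hSd).mpr hIc,
      hIc, i1, i2, i3, i4, hSc, hSd⟩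
  constructor
  · intro Z hZ
    constructor
    · rintro ⟨h1, h2⟩
      obtain ⟨mZ, MZ, hIZ, hIZ', i1, i2, i3, i4, hSc, hSd⟩ := dataB Z hZ h1 h2
      refine ⟨⟨mX, MX, mZ, MZ, hIX2, hIZ', ?_, ?_⟩, ⟨mZ, MZ, mY, MY, hIZ', hIY2, ?_, ?_⟩⟩
      · exact (PRleC_iff hB' hIX.1 hIZ.1).mpr ((sd_mono hSmX hSc).mpr i1)
      · exact (PRleC_iff hB' hIX.2.1 hIZ.2.1).mpr ((sd_mono hSMX hSd).mpr i3)
      · exact (PRleC_iff hB' hIZ.1 hIY.1).mpr ((sd_mono hSc hSmY).mpr i2)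
      · exact (PRleC_iff hB' hIZ.2.1 hIY.2.1).mpr ((sd_mono hSd hSMY).mpr i4)
    · rintro ⟨h1, h2⟩
      obtain ⟨mZ, MZ, hIZ, hIZ', i1, i2, i3, i4, hSc, hSd⟩ := dataB' Z hZ h1 h2
      refine ⟨⟨mX, MX, mZ, MZ, hIX, hIZ, ?_, ?_⟩, ⟨mZ, MZ, mY, MY, hIZ, hIY, ?_, ?_⟩⟩
      · exact (PRleB_iff hB hBpos hIX.1 hIZ.1).mpr i1
      · exact (PRleB_iff hB hBpos hIX.2.1 hIZ.2.1).mpr i3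
      · exact (PRleB_iff hB hBpos hIZ.1 hIY.1).mpr i2
      · exact (PRleB_iff hB hBpos hIZ.2.1 hIY.2.1).mpr i4
  · intro Z W hZ hW hXZ hZY hXW hWY
    obtain ⟨mZ, MZ, hIZ, hIZ', _, _, _, _, hSmZ, hSMZ⟩ := dataB Z hZ hXZ hZY
    obtain ⟨mW, MW, hIW, hIW', _, _, _, _, hSmW, hSMW⟩ := dataB W hW hXW hWY
    constructor
    · rintro ⟨a, b, c, d, hIa, hIc, hac, hbd⟩
      obtain ⟨ha, hb⟩ := interval_unique hB hZ hIZ hIa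
      subst ha; subst hb
      obtain ⟨hc1, hd1⟩ := interval_unique hB hW hIW hIc
      subst hc1; subst hd1
      have i1 : NS e mZ ⊆ NS e mW := (PRleB_iff hB hBpos hIZ.1 hIW.1).mp hac
      have i2 : NS e MZ ⊆ NS e MW := (PRleB_iff hB hBpos hIZ.2.1 hIW.2.1).mp hbd
      exact ⟨mZ, MZ, mW, MW, hIZ', hIW',
        (PRleC_iff hB' hIZ.1 hIW.1).mpr ((sd_mono hSmZ hSmW).mpr i1),
        (PRleC_iff hB' hIZ.2.1 hIW.2.1).mpr ((sd_mono hSMZ hSMW).mpr i2)⟩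
    · rintro ⟨a, b, c, d, hIa, hIc, hac, hbd⟩
      obtain ⟨ha, hb⟩ := interval_unique hB' hZ hIZ' hIa
      subst ha; subst hb
      obtain ⟨hc1, hd1⟩ := interval_unique hB' hW hIW' hIc
      subst hc1; subst hd1
      have i1 : NS e mZ ⊆ NS e mW :=
        (sd_mono hSmZ hSmW).mp ((PRleC_iff hB' hIZ.1 hIW.1).mp hac)
      have i2 : NS e MZ ⊆ NS e MW :=
        (sd_mono hSMZ hSMW).mp ((PRleC_iff hB' hIZ.2.1 hIW.2.1).mp hbd)
      exact ⟨mZ, MZ, mW, MW, hIZ, hIW,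
        (PRleB_iff hB hBpos hIZ.1 hIW.1).mpr i1,
        (PRleB_iff hB hBpos hIZ.2.1 hIW.2.1).mpr i2⟩
end

section
/- The map F ↦ −F = {−v : v ∈ F} is a self-duality of the facial weak order FW(𝒜,B): it is an involutive bijection from the set of faces of 𝒜 to itself, and for any two faces F, G one has F ≤ G in FW(𝒜,B) if and only if −G ≤ −F in FW(𝒜,B). -/
open scoped RealInnerProductSpace Pointwise

variable {V : Type*} [NormedAddCommGroup V] [InnerProductSpace ℝ V] [FiniteDimensional ℝ V]
  {ι : Type*} [Fintype ι]

section AuxDuality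

variable (e : ι → V)

lemma mem_arrComplement_neg {v : V} : -v ∈ arrComplement e ↔ v ∈ arrComplement e := by
  unfold arrComplement
  simp [inner_neg_right]

lemma neg_arrComplement : -(arrComplement e) = arrComplement e := by
  ext v; rw [Set.mem_neg, mem_arrComplement_neg]

lemma neg_set_eq_image (s : Set V) : -s = (Homeomorph.neg V) '' s := by
  rw [← Set.image_neg_eq_neg]; rfl

lemma isRegion_neg {R : Set V} (hR : IsRegion e R) : IsRegion e (-R) := by
  obtain ⟨x, hx, rfl⟩ := hR
  refine ⟨-x, (mem_arrComplement_neg e).2 hx, ?_⟩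
  rw [neg_set_eq_image, (Homeomorph.neg V).image_closure,
    (Homeomorph.neg V).image_connectedComponentIn hx]
  have : (Homeomorph.neg V) '' arrComplement e = arrComplement e := by
    rw [← neg_set_eq_image, neg_arrComplement]
  rw [this]
  rfl

/-- Each region lies in exactly one closed half-space of each hyperplane. -/
lemma region_side {R : Set V} (hR : IsRegion e R) (i : ι) :
    (R ⊆ posHalf e i ∧ ¬ R ⊆ negHalf e i) ∨ (R ⊆ negHalf e i ∧ ¬ R ⊆ posHalf e i) := by
  obtain ⟨x, hx, rfl⟩ := hR
  set C := connectedComponentIn (arrComplement e) x with hC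
  have hxC : x ∈ C := mem_connectedComponentIn hx
  have hCsub : C ⊆ arrComplement e := connectedComponentIn_subset _ _
  have hCpre : IsPreconnected C := isPreconnected_connectedComponentIn
  have hcont : Continuous fun v : V => ⟪e i, v⟫ := continuous_const.inner continuous_id
  have hxne : ⟪e i, x⟫ ≠ 0 := hx i
  have key : (∀ y ∈ C, 0 < ⟪e i, y⟫) ∨ (∀ y ∈ C, ⟪e i, y⟫ < 0) := by
    rcases hxne.lt_or_gt with hneg | hpos
    · right
      intro y hy
      by_contra hynot
      have hy0 : 0 < ⟪e i, y⟫ := lt_of_le_of_ne (not_lt.1 hynot) (Ne.symm (hCsub hy i))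
      obtain ⟨z, hz, hz0⟩ := hCpre.intermediate_value hxC hy hcont.continuousOn
        (Set.mem_Icc.2 ⟨hneg.le, hy0.le⟩)
      exact hCsub hz i hz0
    · left
      intro y hy
      by_contra hynot
      have hy0 : ⟪e i, y⟫ < 0 := lt_of_le_of_ne (not_lt.1 hynot) (hCsub hy i)
      obtain ⟨z, hz, hz0⟩ := hCpre.intermediate_value hy hxC hcont.continuousOn
        (Set.mem_Icc.2 ⟨hy0.le, hpos.le⟩)
      exact hCsub hz i hz0
  rcases key with hp | hn
  · left
    constructor
    · have : IsClosed (posHalf e i) := isClosed_le continuous_const hcont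
      exact closure_minimal (fun y hy => (hp y hy).le) this
    · intro hcon
      have := hcon (subset_closure hxC)
      have hx0 : 0 < ⟪e i, x⟫ := hp x hxC
      exact absurd (le_antisymm this hx0.le) hxne
  · right
    constructor
    · have : IsClosed (negHalf e i) := isClosed_le hcont continuous_const
      exact closure_minimal (fun y hy => (hn y hy).le) this
    · intro hcon
      have := hcon (subset_closure hxC)
      have hx0 : ⟪e i, x⟫ < 0 := hn x hxC
      exact absurd (le_antisymm hx0.le this) hxne

lemma neg_subset_negHalf {R : Set V} (i : ι) : -R ⊆ negHalf e i ↔ R ⊆ posHalf e i := by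
  constructor
  · intro h v hv
    have : -v ∈ -R := by rw [Set.mem_neg, neg_neg]; exact hv
    have := h this
    simpa [negHalf, posHalf, inner_neg_right] using this
  · intro h v hv
    rw [Set.mem_neg] at hv
    have := h hv
    simpa [negHalf, posHalf, inner_neg_right] using this

lemma neg_subset_posHalf {R : Set V} (i : ι) : -R ⊆ posHalf e i ↔ R ⊆ negHalf e i := by
  constructor
  · intro h v hv
    have : -v ∈ -R := by rw [Set.mem_neg, neg_neg]; exact hv
    have := h this
    simpa [negHalf, posHalf, inner_neg_right] using this
  · intro h v hv
    rw [Set.mem_neg] at hv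
    have := h hv
    simpa [negHalf, posHalf, inner_neg_right] using this

variable {B : Set V} (hB : IsRegion e B) (hBpos : ∀ i, B ⊆ posHalf e i)
include hB hBpos

lemma mem_sepSet_iff {R : Set V} (i : ι) :
    i ∈ sepSet e B R ↔ R ⊆ negHalf e i := by
  have hBi : ¬ B ⊆ negHalf e i := by
    rcases region_side e hB i with ⟨_, h⟩ | ⟨_, h⟩
    · exact h
    · exact absurd (hBpos i) h
  constructor
  · rintro (⟨_, h⟩ | ⟨h, _⟩)
    · exact h
    · exact absurd h hBi
  · intro h
    exact Or.inl ⟨hBpos i, h⟩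

lemma sepSet_neg {R : Set V} (hR : IsRegion e R) :
    sepSet e B (-R) = (sepSet e B R)ᶜ := by
  ext i
  rw [Set.mem_compl_iff, mem_sepSet_iff e hB hBpos, mem_sepSet_iff e hB hBpos,
    neg_subset_negHalf]
  rcases region_side e hR i with ⟨h1, h2⟩ | ⟨h1, h2⟩
  · simp [h1, h2]
  · simp [h1, h2]

lemma PRle_neg {R R' : Set V} (hR : IsRegion e R) (hR' : IsRegion e R') :
    PRle e B (-R') (-R) ↔ PRle e B R R' := by
  unfold PRle
  rw [sepSet_neg e hB hBpos hR, sepSet_neg e hB hBpos hR', Set.compl_subset_compl]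

lemma facialInterval_neg {F m M : Set V} (h : IsFacialInterval e B F m M) :
    IsFacialInterval e B (-F) (-M) (-m) := by
  obtain ⟨hm, hM, hiff⟩ := h
  refine ⟨isRegion_neg e hM, isRegion_neg e hm, ?_⟩
  intro R hR
  have hnR : IsRegion e (-R) := isRegion_neg e hR
  have h1 : -F ⊆ R ↔ F ⊆ -R := by
    constructor
    · intro h v hv
      rw [Set.mem_neg]
      exact h (by rw [Set.mem_neg, neg_neg]; exact hv)
    · intro h v hv
      rw [Set.mem_neg] at hv
      have := h hv
      rwa [Set.mem_neg, neg_neg] at this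
  rw [h1, hiff (-R) hnR]
  unfold PRle
  rw [sepSet_neg e hB hBpos hR, sepSet_neg e hB hBpos hm, sepSet_neg e hB hBpos hM]
  constructor
  · rintro ⟨ha, hb⟩
    exact ⟨by rwa [Set.compl_subset_comm] at hb, by rwa [Set.subset_compl_comm] at ha⟩
  · rintro ⟨ha, hb⟩
    exact ⟨by rwa [Set.subset_compl_comm] at hb, by rwa [Set.compl_subset_comm] at ha⟩

lemma FWle_neg {F G : Set V} (h : FWle e B F G) : FWle e B (-G) (-F) := by
  obtain ⟨mF, MF, mG, MG, hF, hG, h1, h2⟩ := h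
  exact ⟨-MG, -mG, -MF, -mF, facialInterval_neg e hB hBpos hG,
    facialInterval_neg e hB hBpos hF,
    (PRle_neg e hB hBpos hF.2.1 hG.2.1).2 h2,
    (PRle_neg e hB hBpos hF.1 hG.1).2 h1⟩

end AuxDuality

/-- The map `F ↦ -F` is a self-duality of the facial weak order. -/
theorem stmt17 (e : ι → V) (hne : ∀ i, e i ≠ 0) (B : Set V)
    (hB : IsRegion e B) (hBpos : ∀ i, B ⊆ posHalf e i) :
    (∀ F, IsFace e F → IsFace e (-F)) ∧
    (∀ F : Set V, -(-F) = F) ∧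
    (∀ F G, IsFace e F → IsFace e G → (FWle e B F G ↔ FWle e B (-G) (-F))) := by
  refine ⟨?_, fun F => neg_neg F, ?_⟩
  · rintro F ⟨Rs, ⟨R0, hR0⟩, hreg, rfl⟩
    refine ⟨(fun R => -R) '' Rs, ⟨-R0, Set.mem_image_of_mem _ hR0⟩, ?_, ?_⟩
    · rintro R ⟨R', hR', rfl⟩
      exact isRegion_neg e (hreg R' hR')
    · ext v
      simp only [Set.mem_neg, Set.mem_sInter, Set.mem_image]
      constructor
      · rintro h R ⟨R', hR', rfl⟩
        rw [Set.mem_neg]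
        exact h R' hR'
      · intro h R hR
        have := h (-R) ⟨R, hR, rfl⟩
        rwa [Set.mem_neg] at this
  · intro F G _ _
    constructor
    · exact FWle_neg e hB hBpos
    · intro h
      have := FWle_neg e hB hBpos h
      rwa [neg_neg, neg_neg] at this
end
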